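/- 1/cos(π/5) + 4·sin(π/5)·tan(π/5) + (sin(π/10)/sin(3π/5))·tan(π/5) + (sin(3π/10)/sin(3π/5))·tan(π/5) = (11√5 − 17)/2. -/

import Mathlib

open Real

/-- The total length of the five-edge lower-bound path equals `(11√5 − 17)/2`:
`1/cos(π/5) + 4·sin(π/5)·tan(π/5) + (sin(π/10)/sin(3π/5))·tan(π/5)
  + (sin(3π/10)/sin(3π/5))·tan(π/5) = (11√5 − 17)/2`. -/
theorem lower_bound_path_length :
    1 / Real.cos (Real.pi / 5) + 4 * Real.sin (Real.pi / 5) * Real.tan (Real.pi / 5) +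
        Real.sin (Real.pi / 10) / Real.sin (3 * Real.pi / 5) * Real.tan (Real.pi / 5) +
        Real.sin (3 * Real.pi / 10) / Real.sin (3 * Real.pi / 5) * Real.tan (Real.pi / 5) =
      (11 * Real.sqrt 5 - 17) / 2 := by
  have hc : Real.cos (Real.pi / 5) = (1 + Real.sqrt 5) / 4 := Real.cos_pi_div_five
  have h1 : Real.sin (3 * Real.pi / 10) = Real.cos (Real.pi / 5) := by
    rw [← Real.sin_pi_div_two_sub]; ring_nf
  have h2 : Real.sin (Real.pi / 10) = Real.cos (2 * (Real.pi / 5)) := by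
    rw [← Real.sin_pi_div_two_sub]; ring_nf
  have h3 : Real.sin (3 * Real.pi / 5) = Real.sin (2 * (Real.pi / 5)) := by
    rw [← Real.sin_pi_sub]; ring_nf
  rw [h1, h2, h3, Real.sin_two_mul, Real.cos_two_mul, Real.tan_eq_sin_div_cos]
  have hs5 : Real.sqrt 5 ^ 2 = 5 := Real.sq_sqrt (by norm_num)
  have hs5pos : (0:ℝ) < Real.sqrt 5 := Real.sqrt_pos.mpr (by norm_num)
  have hcpos : (0:ℝ) < Real.cos (Real.pi / 5) := by rw [hc]; positivity
  have hspos : 0 < Real.sin (Real.pi / 5) := Real.sin_pos_of_pos_of_lt_pi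
    (by positivity) (by linarith [Real.pi_pos])
  set s := Real.sin (Real.pi / 5) with hsdef
  set c := Real.cos (Real.pi / 5) with hcdef
  have hpyth : s ^ 2 = 1 - c ^ 2 := by
    have := Real.sin_sq_add_cos_sq (Real.pi / 5); linarith
  have hsne : s ≠ 0 := ne_of_gt hspos
  have hcne : c ≠ 0 := ne_of_gt hcpos
  have key : 1 / c + 4 * s * (s / c) + (2 * c ^ 2 - 1) / (2 * s * c) * (s / c) +
      c / (2 * s * c) * (s / c) =
      1 / c + 4 * (1 - c ^ 2) / c + (2 * c ^ 2 - 1) / (2 * c ^ 2) + 1 / (2 * c) := by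
    field_simp
    linear_combination (8 * c) * hpyth
  rw [key, hc]
  have h4 : (1:ℝ) + Real.sqrt 5 ≠ 0 := by positivity
  field_simp
  linear_combination (-13 * Real.sqrt 5 - 9) * hs5
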